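/- Let n ≥ 3, let a < b be real numbers, and let f : [a,b] → ℝ be continuous with f(t) > 0 for all t ∈ [a,b]. Then (κ_{n−2} ∫_a^b f(t)^{n−2} dt)² < (n/(n−1)) · (κ_{n−3} ∫_a^b f(t)^{n−3} dt) · (κ_{n−1} ∫_a^b f(t)^{n−1} dt). -/

import Mathlib

open MeasureTheory intervalIntegral

/-- `κ_k`, the volume of the `k`-dimensional unit Euclidean ball (with `κ₀ = 1`). -/
noncomputable def unitBallVol (k : ℕ) : ℝ :=
  (volume (Metric.closedBall (0 : EuclideanSpace ℝ (Fin k)) 1)).toReal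

lemma unitBallVol_eq (k : ℕ) :
    unitBallVol k = Real.sqrt Real.pi ^ k / Real.Gamma (k / 2 + 1) := by
  rcases k with _ | k
  · have hball : (Metric.closedBall (0 : EuclideanSpace ℝ (Fin 0)) 1) = Set.univ := by
      ext x; simp [Subsingleton.elim x 0]
    have h := (PiLp.volume_preserving_toLp (Fin 0)).measure_preimage
      (MeasurableSet.univ (α := EuclideanSpace ℝ (Fin 0))).nullMeasurableSet
    simp only [Set.preimage_univ] at h
    rw [unitBallVol, hball, ← h, volume_pi, Measure.pi_univ]
    simp [Real.Gamma_one]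
  · rw [unitBallVol, EuclideanSpace.volume_closedBall]
    have h1 : (0:ℝ) < Real.Gamma ((k+1 : ℕ) / 2 + 1) :=
      Real.Gamma_pos_of_pos (by positivity)
    simp only [Fintype.card_fin]
    rw [ENNReal.ofReal_one, one_pow, one_mul, ENNReal.toReal_ofReal]
    have h2 : (0:ℝ) < Real.sqrt Real.pi := Real.sqrt_pos.mpr Real.pi_pos
    positivity

lemma unitBallVol_pos (k : ℕ) : 0 < unitBallVol k := by
  rw [unitBallVol_eq]
  have h1 : (0:ℝ) < Real.Gamma ((k : ℕ) / 2 + 1) := Real.Gamma_pos_of_pos (by positivity)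
  have h2 : (0:ℝ) < Real.sqrt Real.pi := Real.sqrt_pos.mpr Real.pi_pos
  positivity

lemma unitBallVol_step (k : ℕ) :
    unitBallVol (k + 2) = 2 * Real.pi / (k + 2) * unitBallVol k := by
  rw [unitBallVol_eq, unitBallVol_eq]
  have h1 : (0:ℝ) < Real.Gamma ((k : ℕ) / 2 + 1) := Real.Gamma_pos_of_pos (by positivity)
  have hne : ((k:ℝ)/2 + 1) ≠ 0 := by positivity
  have hrec : Real.Gamma (((k:ℝ)+2) / 2 + 1) = ((k:ℝ)/2 + 1) * Real.Gamma ((k:ℝ)/2 + 1) := by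
    rw [show ((k:ℝ)+2)/2 + 1 = ((k:ℝ)/2 + 1) + 1 by ring, Real.Gamma_add_one hne]
  have hsq : Real.sqrt Real.pi ^ (k + 2) = Real.sqrt Real.pi ^ k * Real.pi := by
    rw [pow_add, sq, Real.mul_self_sqrt Real.pi_pos.le]
  push_cast
  rw [hrec, hsq]
  have hk2 : (0:ℝ) < (k:ℝ)/2 + 1 := by positivity
  field_simp

lemma J_mul (k : ℕ) :
    (∫ x in (0:ℝ)..Real.pi, Real.sin x ^ (k+1)) * (∫ x in (0:ℝ)..Real.pi, Real.sin x ^ k)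
      = 2 * Real.pi / (k + 1) := by
  induction k with
  | zero =>
    norm_num [integral_sin, Real.cos_pi]
  | succ k ih =>
    have hrec := integral_sin_pow (a := 0) (b := Real.pi) k
    rw [Real.sin_zero, Real.sin_pi] at hrec
    simp only [ne_eq, Nat.succ_ne_zero, not_false_eq_true, zero_pow, zero_mul, mul_zero,
      sub_zero, zero_div, zero_add] at hrec
    rw [show k + 1 + 1 = k + 2 from rfl, hrec]
    push_cast
    have h2 : (k:ℝ) + 2 ≠ 0 := by positivity
    have h1 : (k:ℝ) + 1 ≠ 0 := by positivity
    push_cast at ih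
    field_simp at ih ⊢
    linear_combination ((k:ℝ)+2) * ih

lemma unitBallVol_succ (k : ℕ) :
    unitBallVol (k + 1) = (∫ x in (0:ℝ)..Real.pi, Real.sin x ^ (k+1)) * unitBallVol k := by
  induction k with
  | zero =>
    have h0 : unitBallVol 0 = 1 := by
      rw [unitBallVol_eq]; simp [Real.Gamma_one]
    have h1 : unitBallVol 1 = 2 := by
      rw [unitBallVol_eq]
      have heq : ((1:ℕ) : ℝ) / 2 + 1 = 1/2 + 1 := by norm_num
      rw [heq, Real.Gamma_add_one (by norm_num), Real.Gamma_one_half_eq]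
      have hπ : (0:ℝ) < Real.sqrt Real.pi := Real.sqrt_pos.mpr Real.pi_pos
      field_simp
    norm_num [h0, h1, integral_sin, Real.cos_pi]
  | succ k ih =>
    rw [show k + 1 + 1 = k + 2 from rfl, unitBallVol_step, ih]
    have hJ := J_mul (k+1)
    push_cast at hJ ⊢
    linear_combination (-unitBallVol k) * hJ

lemma J_strict (k : ℕ) :
    (∫ x in (0:ℝ)..Real.pi, Real.sin x ^ (k+1)) < ∫ x in (0:ℝ)..Real.pi, Real.sin x ^ k := by
  apply integral_lt_integral_of_continuousOn_of_le_of_exists_lt Real.pi_pos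
    ((Real.continuous_sin.pow _).continuousOn) ((Real.continuous_sin.pow _).continuousOn)
  · intro x hx
    exact pow_le_pow_of_le_one (Real.sin_nonneg_of_mem_Icc ⟨hx.1.le, hx.2⟩)
      (Real.sin_le_one x) (Nat.le_succ k)
  · refine ⟨Real.pi/6, ⟨by positivity, by linarith [Real.pi_pos]⟩, ?_⟩
    rw [Pi.pow_apply, Pi.pow_apply, Real.sin_pi_div_six]
    exact pow_lt_pow_right_of_lt_one₀ (by norm_num) (by norm_num) (Nat.lt_succ_self k)

lemma kappa_lt (k : ℕ) :
    unitBallVol (k+1) ^ 2 <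
      (((k:ℝ)+3) / ((k:ℝ)+2)) * unitBallVol k * unitBallVol (k+2) := by
  have hJ1pos : 0 < ∫ x in (0:ℝ)..Real.pi, Real.sin x ^ (k+1) := integral_sin_pow_pos _
  have hJ2pos : 0 < ∫ x in (0:ℝ)..Real.pi, Real.sin x ^ (k+2) := integral_sin_pow_pos _
  set J1 := ∫ x in (0:ℝ)..Real.pi, Real.sin x ^ (k+1) with hJ1
  set J2 := ∫ x in (0:ℝ)..Real.pi, Real.sin x ^ (k+2) with hJ2
  have hκ : 0 < unitBallVol k := unitBallVol_pos k
  have h1 : unitBallVol (k+1) = J1 * unitBallVol k := unitBallVol_succ k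
  have h2 : unitBallVol (k+2) = J2 * unitBallVol (k+1) := unitBallVol_succ (k+1)
  have hrec := integral_sin_pow (a := 0) (b := Real.pi) (k+1)
  rw [Real.sin_zero, Real.sin_pi] at hrec
  simp only [ne_eq, Nat.succ_ne_zero, not_false_eq_true, zero_pow, zero_mul, mul_zero,
    sub_zero, zero_div, zero_add] at hrec
  have hJ3lt : (∫ x in (0:ℝ)..Real.pi, Real.sin x ^ (k+3)) < J2 := J_strict (k+2)
  have hkey : J1 < (((k:ℝ)+3) / ((k:ℝ)+2)) * J2 := by
    have hJ1eq : J1 = (((k:ℝ)+3) / ((k:ℝ)+2)) * ∫ x in (0:ℝ)..Real.pi, Real.sin x ^ (k+3) := by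
      rw [show k+1+2 = k+3 from rfl] at hrec
      rw [hJ1, hrec]
      push_cast
      have h2' : (k:ℝ) + 2 ≠ 0 := by positivity
      have h3' : (k:ℝ) + 3 ≠ 0 := by positivity
      field_simp
      ring
    rw [hJ1eq]
    exact mul_lt_mul_of_pos_left hJ3lt (by positivity)
  calc unitBallVol (k+1) ^ 2 = J1 * (J1 * unitBallVol k) * unitBallVol k := by rw [h1]; ring
    _ < (((k:ℝ)+3) / ((k:ℝ)+2)) * J2 * (J1 * unitBallVol k) * unitBallVol k := by
        exact mul_lt_mul_of_pos_right (mul_lt_mul_of_pos_right hkey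
          (mul_pos hJ1pos hκ)) hκ
    _ = (((k:ℝ)+3) / ((k:ℝ)+2)) * unitBallVol k * unitBallVol (k+2) := by
        rw [h2, h1]; ring

/-- For `n ≥ 3` and a positive continuous `f` on `[a,b]` with `a < b`:
`(κ_{n−2}∫f^{n−2})² < (n/(n−1))·(κ_{n−3}∫f^{n−3})·(κ_{n−1}∫f^{n−1})`. -/
theorem integral_power_inequality (n : ℕ) (hn : 3 ≤ n) (a b : ℝ) (hab : a < b)
    (f : ℝ → ℝ) (hf : ContinuousOn f (Set.Icc a b))
    (hpos : ∀ t ∈ Set.Icc a b, 0 < f t) :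
    (unitBallVol (n - 2) * ∫ t in a..b, f t ^ (n - 2)) ^ 2 <
      ((n : ℝ) / ((n : ℝ) - 1)) * (unitBallVol (n - 3) * ∫ t in a..b, f t ^ (n - 3)) *
        (unitBallVol (n - 1) * ∫ t in a..b, f t ^ (n - 1)) := by
  obtain ⟨k, rfl⟩ : ∃ k, n = k + 3 := ⟨n - 3, by omega⟩
  rw [show k + 3 - 2 = k + 1 by omega, show k + 3 - 3 = k by omega,
    show k + 3 - 1 = k + 2 by omega]
  set A := ∫ t in a..b, f t ^ (k+1) with hA
  set B := ∫ t in a..b, f t ^ k with hB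
  set C := ∫ t in a..b, f t ^ (k+2) with hC
  have hint : ∀ j : ℕ, IntervalIntegrable (fun t => f t ^ j) volume a b := fun j =>
    (hf.pow j).intervalIntegrable_of_Icc hab.le
  have hBpos : 0 < B := by
    apply intervalIntegral.integral_pos hab (hf.pow k)
    · exact fun x hx => (pow_pos (hpos x ⟨hx.1.le, hx.2⟩) k).le
    · exact ⟨a, Set.left_mem_Icc.mpr hab.le, pow_pos (hpos a (Set.left_mem_Icc.mpr hab.le)) k⟩
  have hCpos : 0 < C := by
    apply intervalIntegral.integral_pos hab (hf.pow (k+2))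
    · exact fun x hx => (pow_pos (hpos x ⟨hx.1.le, hx.2⟩) (k+2)).le
    · exact ⟨a, Set.left_mem_Icc.mpr hab.le,
        pow_pos (hpos a (Set.left_mem_Icc.mpr hab.le)) (k+2)⟩
  -- Cauchy–Schwarz: A^2 ≤ B * C
  have hCS : A ^ 2 ≤ B * C := by
    have hnn : 0 ≤ ∫ t in a..b, f t ^ k * (B * f t - A)^2 :=
      intervalIntegral.integral_nonneg hab.le
        (fun u hu => mul_nonneg (pow_pos (hpos u hu) k).le (sq_nonneg _))
    have heq : (∫ t in a..b, f t ^ k * (B * f t - A)^2)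
        = ∫ t in a..b, (B^2 * f t ^ (k+2) - 2*A*B * f t ^ (k+1) + A^2 * f t ^ k) :=
      intervalIntegral.integral_congr (fun t _ => by ring)
    have hsplit : (∫ t in a..b, (B^2 * f t ^ (k+2) - 2*A*B * f t ^ (k+1) + A^2 * f t ^ k))
        = B^2 * C - 2*A*B * A + A^2 * B := by
      rw [intervalIntegral.integral_add (((hint (k+2)).const_mul _).sub
            ((hint (k+1)).const_mul _)) ((hint k).const_mul _),
          intervalIntegral.integral_sub ((hint (k+2)).const_mul _) ((hint (k+1)).const_mul _),
          intervalIntegral.integral_const_mul, intervalIntegral.integral_const_mul,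
          intervalIntegral.integral_const_mul]
    rw [heq, hsplit] at hnn
    nlinarith [hBpos, sq_nonneg A]
  have hκlt := kappa_lt k
  push_cast
  rw [show ((k:ℝ) + 3) - 1 = (k:ℝ) + 2 by ring]
  calc (unitBallVol (k+1) * A) ^ 2 = unitBallVol (k+1)^2 * A^2 := by ring
    _ ≤ unitBallVol (k+1)^2 * (B * C) :=
        mul_le_mul_of_nonneg_left hCS (sq_nonneg _)
    _ < ((((k:ℝ)+3) / ((k:ℝ)+2)) * unitBallVol k * unitBallVol (k+2)) * (B * C) :=
        mul_lt_mul_of_pos_right hκlt (mul_pos hBpos hCpos)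
    _ = (((k:ℝ)+3) / ((k:ℝ)+2)) * (unitBallVol k * B) * (unitBallVol (k+2) * C) := by ring
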